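/- Caccioppoli-type estimate: Let I = ℝ or I = (0,∞), F : ℝ² → ℝ C² and p-homogeneous with p > 2, F > 0 off the origin, c_F := min{F on the unit p-sphere}. Let (u,v) be a bounded C² solution of −u'' = ∂_u F(u,v), −v'' = ∂_v F(u,v) on I that is stable in I \ K for a compact K. Then for every ψ ∈ C¹_c(I \ K), ∫_I (|u|^p + |v|^p) ψ² dt ≤ (p(p−2)c_F)^{−1} ∫_I (u² + v²) (ψ')² dt. -/

import Mathlib

open MeasureTheory Filter Set


lemma aux_contDiff_glue {f : ℝ → ℝ} {S U : Set ℝ} (hU : IsOpen U) (hS : IsClosed S) (hSU : S ⊆ U)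
    (h1 : ∀ x ∈ U, ContDiffAt ℝ 1 f x) (h0 : ∀ x ∉ S, f x = 0) : ContDiff ℝ 1 f := by
  rw [contDiff_iff_contDiffAt]
  intro x
  by_cases hx : x ∈ U
  · exact h1 x hx
  · have hxS : x ∈ Sᶜ := fun h => hx (hSU h)
    have hev : f =ᶠ[nhds x] (fun _ => (0:ℝ)) :=
      eventually_of_mem (hS.isOpen_compl.mem_nhds hxS) h0
    exact (contDiffAt_const (c := (0:ℝ))).congr_of_eventuallyEq hev

lemma aux_continuous_glue {f : ℝ → ℝ} {S U : Set ℝ} (hU : IsOpen U) (hS : IsClosed S) (hSU : S ⊆ U)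
    (h1 : ContinuousOn f U) (h0 : ∀ x ∉ S, f x = 0) : Continuous f := by
  rw [continuous_iff_continuousAt]
  intro x
  by_cases hx : x ∈ U
  · exact h1.continuousAt (hU.mem_nhds hx)
  · have hxS : x ∈ Sᶜ := fun h => hx (hSU h)
    have hev : f =ᶠ[nhds x] (fun _ => (0:ℝ)) :=
      eventually_of_mem (hS.isOpen_compl.mem_nhds hxS) h0
    exact continuousAt_const.congr hev.symm

lemma aux_deriv_zero_off {f : ℝ → ℝ} {S : Set ℝ} (hS : IsClosed S) (h0 : ∀ x ∉ S, f x = 0)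
    {x : ℝ} (hx : x ∉ S) : deriv f x = 0 := by
  have hev : f =ᶠ[nhds x] (fun _ => (0:ℝ)) :=
    eventually_of_mem (hS.isOpen_compl.mem_nhds hx) h0
  rw [hev.deriv_eq, deriv_const]

lemma aux_contDiffAt_of_hasDerivAt {f f' : ℝ → ℝ} {s : Set ℝ} (hs : IsOpen s)
    (h : ∀ t ∈ s, HasDerivAt f (f' t) t) (hc : ContinuousOn f' s) :
    ∀ t ∈ s, ContDiffAt ℝ 1 f t := by
  have hcd : ContDiffOn ℝ 1 f s := by
    rw [show (1 : WithTop ℕ∞) = 0 + 1 from (zero_add 1).symm, contDiffOn_succ_iff_deriv_of_isOpen hs]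
    refine ⟨fun t ht => (h t ht).differentiableAt.differentiableWithinAt, by simp, ?_⟩
    rw [contDiffOn_zero]
    exact hc.congr fun t ht => (h t ht).deriv
  intro t ht
  exact (hcd t ht).contDiffAt (hs.mem_nhds ht)

section hom
variable {p : ℝ} (hp : 2 < p) {F : ℝ × ℝ → ℝ} (hF : ContDiff ℝ 2 F)
  (hhom : ∀ t : ℝ, 0 < t → ∀ z : ℝ × ℝ, F (t • z) = t ^ p * F z)

include hp hhom in
lemma aux_F_zero : F 0 = 0 := by
  have h := hhom 2 two_pos 0
  rw [smul_zero] at h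
  have h2 : (1:ℝ) < 2 ^ p := by
    have := Real.one_lt_rpow_iff_of_pos (x := 2) two_pos (y := p)
    rw [this]
    exact Or.inl ⟨one_lt_two, by linarith⟩
  nlinarith [h2]

include hp hF hhom in
lemma aux_euler : ∀ z : ℝ × ℝ, fderiv ℝ F z z = p * F z := by
  intro z
  have hd1 : HasDerivAt (fun t : ℝ => F (t • z)) (fderiv ℝ F ((1:ℝ) • z) z) 1 := by
    have hz : HasDerivAt (fun t : ℝ => t • z) z 1 := by
      simpa using (hasDerivAt_id (1:ℝ)).smul_const z
    exact ((hF.differentiable (by norm_num)).differentiableAt.hasFDerivAt.comp_hasDerivAt 1 hz)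
  have hd2 : HasDerivAt (fun t : ℝ => t ^ p * F z) (p * F z) 1 := by
    have : HasDerivAt (fun t : ℝ => t ^ p) (p * (1:ℝ) ^ (p - 1)) 1 :=
      Real.hasDerivAt_rpow_const (Or.inl one_ne_zero)
    simpa [Real.one_rpow] using this.mul_const (F z)
  have hev : (fun t : ℝ => F (t • z)) =ᶠ[nhds (1:ℝ)] fun t => t ^ p * F z := by
    filter_upwards [eventually_gt_nhds (by norm_num : (0:ℝ) < 1)] with t ht
    exact hhom t ht z
  have huniq := (hd2.congr_of_eventuallyEq hev).unique hd1
  rw [one_smul] at huniq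
  linarith [huniq]

lemma aux_clm (hF : ContDiff ℝ 2 F) (x c w : ℝ × ℝ) :
    fderiv ℝ (fun y => fderiv ℝ F y c) x w = fderiv ℝ (fderiv ℝ F) x w c := by
  have hdf : DifferentiableAt ℝ (fderiv ℝ F) x :=
    ((hF.fderiv_right (m := 1) (le_refl 2)).differentiable one_ne_zero).differentiableAt
  have := fderiv_clm_apply (𝕜 := ℝ) (c := fderiv ℝ F) (u := fun _ => c) hdf
    (differentiableAt_const c)
  rw [this]
  simp

include hp hF hhom in
lemma aux_second : ∀ z : ℝ × ℝ, fderiv ℝ (fderiv ℝ F) z z z = p * (p - 1) * F z := by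
  intro z
  have hG : (fun y : ℝ × ℝ => fderiv ℝ F y y) = fun y => p * F y := by
    funext y; exact aux_euler hp hF hhom y
  have hdf : DifferentiableAt ℝ (fderiv ℝ F) z :=
    ((hF.fderiv_right (m := 1) (le_refl 2)).differentiable one_ne_zero).differentiableAt
  have hdF : DifferentiableAt ℝ F z := (hF.differentiable (by norm_num)).differentiableAt
  have h1 : fderiv ℝ (fun y : ℝ × ℝ => fderiv ℝ F y y) z =
      (fderiv ℝ F z) + (fderiv ℝ (fderiv ℝ F) z).flip z := by
    have := fderiv_clm_apply (𝕜 := ℝ) (c := fderiv ℝ F) (u := fun y => y) hdf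
      differentiableAt_id
    rw [this]; simp [fderiv_id']
  have h2 : fderiv ℝ (fun y : ℝ × ℝ => p * F y) z = p • fderiv ℝ F z := by
    exact fderiv_const_mul hdF p
  have h4 : fderiv ℝ (fun y : ℝ × ℝ => fderiv ℝ F y y) z = p • fderiv ℝ F z := by
    rw [hG]; exact h2
  have h5 := h1.symm.trans h4
  have h6 := congrArg (fun L : (ℝ × ℝ) →L[ℝ] ℝ => L z) h5
  simp only [ContinuousLinearMap.add_apply, ContinuousLinearMap.flip_apply,
    ContinuousLinearMap.smul_apply, smul_eq_mul] at h6
  have heu := aux_euler hp hF hhom z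
  rw [heu] at h6
  linarith [h6]
end hom

lemma aux_min {p : ℝ} (hp : 2 < p) {F : ℝ × ℝ → ℝ}
    (hhom : ∀ t : ℝ, 0 < t → ∀ z : ℝ × ℝ, F (t • z) = t ^ p * F z)
    {cF : ℝ} (hcF : 0 < cF)
    (hmin : IsLeast (F '' {z : ℝ × ℝ | |z.1| ^ p + |z.2| ^ p = 1}) cF)
    (hF0 : F 0 = 0) :
    ∀ z : ℝ × ℝ, cF * (|z.1| ^ p + |z.2| ^ p) ≤ F z := by
  intro z
  have hp0 : (0:ℝ) < p := by linarith
  by_cases hz : z = 0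
  · subst hz
    simp [hF0, Real.zero_rpow (ne_of_gt hp0)]
  · set m : ℝ := |z.1| ^ p + |z.2| ^ p with hm
    have hm0 : 0 < m := by
      by_cases h1 : z.1 = 0
      · have h2 : z.2 ≠ 0 := fun h => hz (Prod.ext h1 h)
        have hA : 0 < |z.2| ^ p := Real.rpow_pos_of_pos (abs_pos.2 h2) p
        have hB : 0 ≤ |z.1| ^ p := Real.rpow_nonneg (abs_nonneg _) p
        linarith
      · have hA : 0 < |z.1| ^ p := Real.rpow_pos_of_pos (abs_pos.2 h1) p
        have hB : 0 ≤ |z.2| ^ p := Real.rpow_nonneg (abs_nonneg _) p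
        linarith
    set s : ℝ := m ^ (1/p) with hs
    have hs0 : 0 < s := Real.rpow_pos_of_pos hm0 _
    have hsp : s ^ p = m := by
      rw [hs, ← Real.rpow_mul hm0.le, one_div, inv_mul_cancel₀ (ne_of_gt hp0), Real.rpow_one]
    set w : ℝ × ℝ := s⁻¹ • z with hw
    have hwmem : |w.1| ^ p + |w.2| ^ p = 1 := by
      have h1 : |w.1| = s⁻¹ * |z.1| := by
        rw [hw]; simp [abs_mul, abs_of_pos (inv_pos.2 hs0)]
      have h2 : |w.2| = s⁻¹ * |z.2| := by
        rw [hw]; simp [abs_mul, abs_of_pos (inv_pos.2 hs0)]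
      rw [h1, h2, Real.mul_rpow (inv_pos.2 hs0).le (abs_nonneg _),
        Real.mul_rpow (inv_pos.2 hs0).le (abs_nonneg _),
        Real.inv_rpow hs0.le, hsp]
      field_simp
      exact hm.symm
    have hle : cF ≤ F w := hmin.2 ⟨w, hwmem, rfl⟩
    have hzw : z = s • w := by
      rw [hw, smul_inv_smul₀ (ne_of_gt hs0)]
    calc cF * m ≤ F w * m := by nlinarith
      _ = s ^ p * F w := by rw [hsp]; ring
      _ = F (s • w) := (hhom s hs0 w).symm
      _ = F z := by rw [← hzw]

lemma aux_key (L : (ℝ × ℝ) →L[ℝ] ℝ) (a b : ℝ) :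
    L (a, b) = a * L (1, 0) + b * L (0, 1) := by
  have h : (a, b) = a • ((1:ℝ), (0:ℝ)) + b • ((0:ℝ), (1:ℝ)) := by
    simp [Prod.smul_mk]
  rw [h, map_add, L.map_smul, L.map_smul, smul_eq_mul, smul_eq_mul]


theorem stmt9 (I : Set ℝ) (hI : I = Set.univ ∨ I = Set.Ioi 0)
    (p : ℝ) (hp : 2 < p) (F : ℝ × ℝ → ℝ) (hF : ContDiff ℝ 2 F)
    (hhom : ∀ t : ℝ, 0 < t → ∀ z : ℝ × ℝ, F (t • z) = t ^ p * F z)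
    (hpos : ∀ z : ℝ × ℝ, z ≠ 0 → 0 < F z)
    (cF : ℝ) (hcF : 0 < cF)
    (hmin : IsLeast (F '' {z : ℝ × ℝ | |z.1| ^ p + |z.2| ^ p = 1}) cF)
    (u v u' v' u'' v'' : ℝ → ℝ)
    (hbd : ∃ C, ∀ t ∈ I, |u t| ≤ C ∧ |v t| ≤ C)
    (hu : ∀ t ∈ I, HasDerivAt u (u' t) t) (hu' : ∀ t ∈ I, HasDerivAt u' (u'' t) t)
    (hv : ∀ t ∈ I, HasDerivAt v (v' t) t) (hv' : ∀ t ∈ I, HasDerivAt v' (v'' t) t)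
    (hequ : ∀ t ∈ I, -u'' t = fderiv ℝ F (u t, v t) (1, 0))
    (heqv : ∀ t ∈ I, -v'' t = fderiv ℝ F (u t, v t) (0, 1))
    (K : Set ℝ) (hK : IsCompact K) (hKI : K ⊆ I)
    (hstab : ∀ φ₁ φ₂ : ℝ → ℝ, ContDiff ℝ 1 φ₁ → ContDiff ℝ 1 φ₂ →
      HasCompactSupport φ₁ → HasCompactSupport φ₂ →
      tsupport φ₁ ⊆ I \ K → tsupport φ₂ ⊆ I \ K →
      0 ≤ ∫ t in I, (deriv φ₁ t ^ 2 + deriv φ₂ t ^ 2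
          - fderiv ℝ (fun y => fderiv ℝ F y (φ₁ t, φ₂ t)) (u t, v t) (φ₁ t, φ₂ t))) :
    ∀ ψ : ℝ → ℝ, ContDiff ℝ 1 ψ → HasCompactSupport ψ → tsupport ψ ⊆ I \ K →
      ∫ t in I, (|u t| ^ p + |v t| ^ p) * ψ t ^ 2
        ≤ (p * (p - 2) * cF)⁻¹ * ∫ t in I, (u t ^ 2 + v t ^ 2) * deriv ψ t ^ 2 := by
  intro ψ hψ hψc hψs
  -- basic setup
  have hIopen : IsOpen I := by
    rcases hI with h | h
    · rw [h]; exact isOpen_univ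
    · rw [h]; exact isOpen_Ioi
  set S : Set ℝ := tsupport ψ with hSdef
  have hSc : IsCompact S := hψc
  have hScl : IsClosed S := isClosed_tsupport ψ
  have hSI : S ⊆ I := hψs.trans diff_subset
  have hF0 : F 0 = 0 := aux_F_zero hp hhom
  have heuler := aux_euler hp hF hhom
  have hsec := aux_second hp hF hhom
  have hLB := aux_min hp hhom hcF hmin hF0
  have hpp : (0:ℝ) < p * (p - 2) := by nlinarith
  -- continuity facts
  have hucont : ContinuousOn u I := fun t ht => (hu t ht).continuousAt.continuousWithinAt
  have hu'cont : ContinuousOn u' I := fun t ht => (hu' t ht).continuousAt.continuousWithinAt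
  have hvcont : ContinuousOn v I := fun t ht => (hv t ht).continuousAt.continuousWithinAt
  have hv'cont : ContinuousOn v' I := fun t ht => (hv' t ht).continuousAt.continuousWithinAt
  have hfd : Continuous (fderiv ℝ F) := (hF.fderiv_right (m := 1) (by norm_num)).continuous
  have hzcont : ContinuousOn (fun t => (u t, v t)) I := hucont.prodMk hvcont
  have hFzcont : ContinuousOn (fun t => F (u t, v t)) I :=
    (hF.continuous).comp_continuousOn hzcont
  have happly : ∀ w : ℝ × ℝ, ContinuousOn (fun t => fderiv ℝ F (u t, v t) w) I := by
    intro w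
    exact ((ContinuousLinearMap.apply ℝ ℝ w).continuous.comp hfd).comp_continuousOn hzcont
  have hu''cont : ContinuousOn u'' I := by
    refine ((happly (1,0)).neg).congr fun t ht => ?_
    have := hequ t ht; simp only [Pi.neg_apply]; linarith
  have hv''cont : ContinuousOn v'' I := by
    refine ((happly (0,1)).neg).congr fun t ht => ?_
    have := heqv t ht; simp only [Pi.neg_apply]; linarith
  have hψd : Differentiable ℝ ψ := hψ.differentiable one_ne_zero
  have hψcont : Continuous ψ := hψd.continuous
  have hψ' : Continuous (deriv ψ) := hψ.continuous_deriv le_rfl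
  have hψ0 : ∀ x ∉ S, ψ x = 0 := fun x hx => image_eq_zero_of_notMem_tsupport hx
  have hdψ0 : ∀ x ∉ S, deriv ψ x = 0 := fun x hx => aux_deriv_zero_off hScl hψ0 hx
  have hcdu := aux_contDiffAt_of_hasDerivAt hIopen hu hu'cont
  have hcdv := aux_contDiffAt_of_hasDerivAt hIopen hv hv'cont
  -- compact support helper
  have hcs : ∀ f : ℝ → ℝ, (∀ x ∉ S, f x = 0) → HasCompactSupport f := by
    intro f hf
    exact HasCompactSupport.intro hSc hf
  -- test functions
  set φ₁ : ℝ → ℝ := fun t => ψ t * u t with hφ₁def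
  set φ₂ : ℝ → ℝ := fun t => ψ t * v t with hφ₂def
  have hφ₁0 : ∀ x ∉ S, φ₁ x = 0 := fun x hx => by simp [hφ₁def, hψ0 x hx]
  have hφ₂0 : ∀ x ∉ S, φ₂ x = 0 := fun x hx => by simp [hφ₂def, hψ0 x hx]
  have hφ₁cd : ContDiff ℝ 1 φ₁ :=
    aux_contDiff_glue hIopen hScl hSI (fun x hx => (hψ.contDiffAt).mul (hcdu x hx)) hφ₁0
  have hφ₂cd : ContDiff ℝ 1 φ₂ :=
    aux_contDiff_glue hIopen hScl hSI (fun x hx => (hψ.contDiffAt).mul (hcdv x hx)) hφ₂0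
  have hφ₁supp : tsupport φ₁ ⊆ S := closure_minimal (fun x hx => by
    by_contra h; exact hx (hφ₁0 x h)) hScl
  have hφ₂supp : tsupport φ₂ ⊆ S := closure_minimal (fun x hx => by
    by_contra h; exact hx (hφ₂0 x h)) hScl
  have hφ₁c : HasCompactSupport φ₁ := hcs φ₁ hφ₁0
  have hφ₂c : HasCompactSupport φ₂ := hcs φ₂ hφ₂0
  have hdφ₁ : ∀ t ∈ I, deriv φ₁ t = deriv ψ t * u t + ψ t * u' t := fun t ht =>
    (((hψd t).hasDerivAt).mul (hu t ht)).deriv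
  have hdφ₂ : ∀ t ∈ I, deriv φ₂ t = deriv ψ t * v t + ψ t * v' t := fun t ht =>
    (((hψd t).hasDerivAt).mul (hv t ht)).deriv
  have hdφ₁0 : ∀ x ∉ S, deriv φ₁ x = 0 := fun x hx => aux_deriv_zero_off hScl hφ₁0 hx
  have hdφ₂0 : ∀ x ∉ S, deriv φ₂ x = 0 := fun x hx => aux_deriv_zero_off hScl hφ₂0 hx
  -- the auxiliary function g and its derivative
  set g : ℝ → ℝ := fun t => ψ t ^ 2 * (u t * u' t + v t * v' t) with hgdef
  have hg0 : ∀ x ∉ S, g x = 0 := fun x hx => by simp [hgdef, hψ0 x hx]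
  have hgI : ∀ t ∈ I, HasDerivAt g
      (2 * ψ t ^ 1 * deriv ψ t * (u t * u' t + v t * v' t)
        + ψ t ^ 2 * (u' t * u' t + u t * u'' t + (v' t * v' t + v t * v'' t))) t := by
    intro t ht
    exact (((hψd t).hasDerivAt.pow 2).mul
      (((hu t ht).mul (hu' t ht)).add ((hv t ht).mul (hv' t ht)))).congr_deriv (by push_cast; simp only [Pi.add_apply, Pi.mul_apply, Pi.pow_apply])
  have hgdiff : ∀ t, DifferentiableAt ℝ g t := by
    intro t
    by_cases ht : t ∈ I
    · exact (hgI t ht).differentiableAt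
    · have hxS : t ∈ Sᶜ := fun h => ht (hSI h)
      have hev : g =ᶠ[nhds t] (fun _ => (0:ℝ)) :=
        eventually_of_mem (hScl.isOpen_compl.mem_nhds hxS) hg0
      exact (differentiableAt_const (0:ℝ)).congr_of_eventuallyEq hev
  have hgderiv : ∀ t ∈ I, deriv g t =
      2 * ψ t ^ 1 * deriv ψ t * (u t * u' t + v t * v' t)
        + ψ t ^ 2 * (u' t * u' t + u t * u'' t + (v' t * v' t + v t * v'' t)) :=
    fun t ht => (hgI t ht).deriv
  have hdg0 : ∀ x ∉ S, deriv g x = 0 := fun x hx => aux_deriv_zero_off hScl hg0 hx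
  -- named integrands
  set A : ℝ → ℝ := fun t => (u t ^ 2 + v t ^ 2) * deriv ψ t ^ 2 with hAdef
  set C : ℝ → ℝ := fun t => ψ t ^ 2 * F (u t, v t) with hCdef
  set L : ℝ → ℝ := fun t => (|u t| ^ p + |v t| ^ p) * ψ t ^ 2 with hLdef
  have hA0 : ∀ x ∉ S, A x = 0 := fun x hx => by simp [hAdef, hdψ0 x hx]
  have hC0 : ∀ x ∉ S, C x = 0 := fun x hx => by simp [hCdef, hψ0 x hx]
  have hL0 : ∀ x ∉ S, L x = 0 := fun x hx => by simp [hLdef, hψ0 x hx]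
  -- pointwise identity
  have hQeq : (fun t => deriv φ₁ t ^ 2 + deriv φ₂ t ^ 2
      - fderiv ℝ (fun y => fderiv ℝ F y (φ₁ t, φ₂ t)) (u t, v t) (φ₁ t, φ₂ t))
      = fun t => A t + deriv g t - (p * (p - 2)) * C t := by
    funext t
    by_cases ht : t ∈ I
    · have e1 := hdφ₁ t ht
      have e2 := hdφ₂ t ht
      have e3 := hgderiv t ht
      have hpair : (φ₁ t, φ₂ t) = ψ t • (u t, v t) := by
        simp [hφ₁def, hφ₂def, Prod.smul_mk, smul_eq_mul]
      have e4 : fderiv ℝ (fun y => fderiv ℝ F y (φ₁ t, φ₂ t)) (u t, v t) (φ₁ t, φ₂ t)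
          = ψ t ^ 2 * (p * (p - 1) * F (u t, v t)) := by
        rw [hpair, aux_clm hF]
        rw [(fderiv ℝ (fderiv ℝ F) (u t, v t)).map_smul, ContinuousLinearMap.smul_apply,
          (fderiv ℝ (fderiv ℝ F) (u t, v t) ((u t, v t))).map_smul, smul_eq_mul, smul_eq_mul,
          hsec (u t, v t)]
        ring
      have e5 : u t * u'' t + v t * v'' t = -(p * F (u t, v t)) := by
        have h1 := hequ t ht
        have h2 := heqv t ht
        have h3 := aux_key (fderiv ℝ F (u t, v t)) (u t) (v t)
        have h4 := heuler (u t, v t)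
        rw [h4] at h3
        linear_combination (-(u t)) * h1 + (-(v t)) * h2 + h3
      rw [e1, e2, e3, e4]
      simp only [hAdef, hCdef]
      linear_combination (-(ψ t ^ 2)) * e5
    · have hxS : t ∉ S := fun h => ht (hSI h)
      rw [hdφ₁0 t hxS, hdφ₂0 t hxS, hA0 t hxS, hC0 t hxS, hdg0 t hxS,
        hφ₁0 t hxS, hφ₂0 t hxS]
      have hzero : (fun y : ℝ × ℝ => fderiv ℝ F y ((0:ℝ), (0:ℝ))) = fun _ => (0:ℝ) := by
        funext y
        exact (fderiv ℝ F y).map_zero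
      rw [hzero, fderiv_const_apply]
      simp
  -- continuity and integrability of the pieces
  have hAc : Continuous A :=
    aux_continuous_glue hIopen hScl hSI
      (((hucont.pow 2).add (hvcont.pow 2)).mul (hψ'.continuousOn.pow 2)) hA0
  have hCc : Continuous C :=
    aux_continuous_glue hIopen hScl hSI
      (((hψcont.continuousOn).pow 2).mul hFzcont) hC0
  have hLc : Continuous L := by
    refine aux_continuous_glue hIopen hScl hSI ?_ hL0
    have h1 : ContinuousOn (fun t => |u t| ^ p) I := by
      exact ContinuousOn.rpow_const hucont.abs (fun t ht => Or.inr (by positivity))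
    have h2 : ContinuousOn (fun t => |v t| ^ p) I := by
      exact ContinuousOn.rpow_const hvcont.abs (fun t ht => Or.inr (by positivity))
    exact (h1.add h2).mul ((hψcont.continuousOn).pow 2)
  have hGc : Continuous (deriv g) := by
    refine aux_continuous_glue hIopen hScl hSI ?_ hdg0
    refine ContinuousOn.congr ?_ hgderiv
    exact ((((continuous_const.mul (hψcont.pow 1)).mul hψ').continuousOn).mul
        ((hucont.mul hu'cont).add (hvcont.mul hv'cont))).add
      (((hψcont.pow 2).continuousOn).mul
        (((hu'cont.mul hu'cont).add (hucont.mul hu''cont)).add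
          ((hv'cont.mul hv'cont).add (hvcont.mul hv''cont))))
  have hgc : Continuous g :=
    aux_continuous_glue hIopen hScl hSI
      (((hψcont.continuousOn).pow 2).mul ((hucont.mul hu'cont).add (hvcont.mul hv'cont))) hg0
  have hAint : Integrable A := hAc.integrable_of_hasCompactSupport (hcs A hA0)
  have hCint : Integrable C := hCc.integrable_of_hasCompactSupport (hcs C hC0)
  have hLint : Integrable L := hLc.integrable_of_hasCompactSupport (hcs L hL0)
  have hGint : Integrable (deriv g) := hGc.integrable_of_hasCompactSupport (hcs _ hdg0)
  have hgint : Integrable g := hgc.integrable_of_hasCompactSupport (hcs g hg0)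
  -- the integral of deriv g vanishes
  have hGzero : ∫ t, deriv g t = 0 :=
    integral_eq_zero_of_hasDerivAt_of_integrable (fun x => (hgdiff x).hasDerivAt) hGint hgint
  -- set integrals equal full integrals
  have hconv : ∀ f : ℝ → ℝ, (∀ x ∉ S, f x = 0) → ∫ t in I, f t = ∫ t, f t := by
    intro f hf
    exact setIntegral_eq_integral_of_forall_compl_eq_zero fun x hx => hf x (fun h => hx (hSI h))
  -- stability
  have h0 := hstab φ₁ φ₂ hφ₁cd hφ₂cd hφ₁c hφ₂c (hφ₁supp.trans hψs) (hφ₂supp.trans hψs)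
  rw [hQeq] at h0
  have hsum0 : ∀ x ∉ S, A x + deriv g x - (p * (p - 2)) * C x = 0 := by
    intro x hx; rw [hA0 x hx, hC0 x hx, hdg0 x hx]; ring
  rw [hconv (fun t => A t + deriv g t - (p * (p - 2)) * C t) hsum0] at h0
  have hsplit : ∫ t, (A t + deriv g t - (p * (p - 2)) * C t)
      = (∫ t, A t) + (∫ t, deriv g t) - (p * (p - 2)) * ∫ t, C t := by
    rw [integral_sub _ _, integral_add hAint hGint, integral_const_mul _ _]
    exacts [hAint.add hGint, hCint.const_mul _]
  rw [hsplit, hGzero] at h0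
  -- comparison of C and L
  have hmono : cF * ∫ t, L t ≤ ∫ t, C t := by
    rw [← integral_const_mul _ _]
    refine integral_mono (hLint.const_mul cF) hCint ?_
    intro t
    by_cases ht : t ∈ I
    · have := hLB (u t, v t)
      simp only [hLdef, hCdef]
      nlinarith [sq_nonneg (ψ t), this]
    · have hxS : t ∉ S := fun h => ht (hSI h)
      simp [hL0 t hxS, hC0 t hxS]
  -- finish
  rw [hconv L hL0, hconv A hA0]
  rw [le_inv_mul_iff₀ (by positivity)]
  have hCnn : ∀ t, 0 ≤ C t := by
    intro t
    have h1 : 0 ≤ |u t| ^ p := Real.rpow_nonneg (abs_nonneg _) p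
    have h2 : 0 ≤ |v t| ^ p := Real.rpow_nonneg (abs_nonneg _) p
    have h3 := hLB (u t, v t)
    have hFnn : 0 ≤ F (u t, v t) := by nlinarith
    simp only [hCdef]
    exact mul_nonneg (sq_nonneg _) hFnn
  have hkey := mul_le_mul_of_nonneg_left hmono (le_of_lt hpp)
  nlinarith [hkey, h0]
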